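/- Let F = {f₁, …, f_N} be a finite nonempty set of functions f_i(z) = a_i·z + b_i with a_i, b_i ∈ ℤ and |a_i| > 1 for all i, let y ∈ ℕ, let Q = 1 + max_i |b_i| and R = max(Q, y). Then for every z ∈ ℕ and every F-composition G that is valid with respect to z, if G(z) = y then 0 ≤ z ≤ R. -/
import Mathlib

private lemma escape_lemma (N : ℕ) (a b : Fin N → ℤ)
    (ha : ∀ i, 1 < |a i|) (Q R : ℤ)
    (hQ : Q = 1 + ↑(Finset.univ.sup fun i => (b i).natAbs))
    (hQR : Q ≤ R) :
    ∀ (L : List (Fin N)) (w : ℤ), R < w →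
      (∀ t, t <+: L → 0 ≤ t.foldl (fun w i => a i * w + b i) w) →
      R < L.foldl (fun w i => a i * w + b i) w := by
  intro L
  induction L with
  | nil => intro w hw _; simpa using hw
  | cons i L ih =>
    intro w hw hvalid
    have hbi : |b i| ≤ Q - 1 := by
      have : (b i).natAbs ≤ Finset.univ.sup fun i => (b i).natAbs :=
        Finset.le_sup (f := fun i => (b i).natAbs) (Finset.mem_univ i)
      have := Int.ofNat_le.mpr this
      simp only [Int.abs_eq_natAbs]
      omega
    have hw0 : 0 < w := by
      have : (0:ℤ) < Q := by rw [hQ]; positivity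
      linarith
    have hnn : 0 ≤ a i * w + b i := by
      have := hvalid [i] ⟨L, rfl⟩
      simpa using this
    have h2 : 2 ≤ |a i| := ha i
    have habs : |a i * w| = |a i| * w := by
      rw [abs_mul, abs_of_pos hw0]
    have hkey : R < a i * w + b i := by
      have h1 : |a i * w| ≤ |a i * w + b i| + |b i| := by
        calc |a i * w| = |(a i * w + b i) - b i| := by ring_nf
        _ ≤ |a i * w + b i| + |b i| := abs_sub _ _
      have h3 : |a i * w + b i| = a i * w + b i := abs_of_nonneg hnn
      nlinarith [abs_nonneg (b i)]
    simp only [List.foldl_cons]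
    exact ih (a i * w + b i) hkey (fun t ht => by
      have := hvalid (i :: t) ((List.prefix_cons_inj i).mpr ht)
      simpa using this)

theorem preimages_bounded_valid (N : ℕ) (hN : 0 < N) (a b : Fin N → ℤ)
    (ha : ∀ i, 1 < |a i|) (y : ℕ) (Q R : ℤ)
    (hQ : Q = 1 + ↑(Finset.univ.sup fun i => (b i).natAbs))
    (hR : R = max Q (y : ℤ))
    (z : ℕ) (L : List (Fin N))
    (hvalid : ∀ t, t <+: L → 0 ≤ t.foldl (fun w i => a i * w + b i) (z : ℤ))
    (h : L.foldl (fun w i => a i * w + b i) (z : ℤ) = (y : ℤ)) :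
    0 ≤ (z : ℤ) ∧ (z : ℤ) ≤ R := by
  refine ⟨Int.ofNat_nonneg z, ?_⟩
  by_contra hz
  push_neg at hz
  have := escape_lemma N a b ha Q R hQ (hR ▸ le_max_left _ _) L (z : ℤ) hz hvalid
  rw [h] at this
  have : (y : ℤ) ≤ R := hR ▸ le_max_right _ _
  omega
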